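/- arXiv:1311.3143 — 4 statements merged into one kernel-verified Lean document; each statement's English description precedes it below -/
import Mathlib

section
/- Let R be a commutative ring, d ≥ 2, and let α_1,…,α_d be types. Let E_k : α_k → R and D_k : α_k → R for k = 1,…,d. Define the Laplace-like sum H : α_1 × ⋯ × α_d → R by H(x_1,…,x_d) = Σ_{m=1}^d (∏_{k=1}^{m-1} E_k(x_k)) · D_m(x_m) · (∏_{k=m+1}^d E_k(x_k)). Define cores G_1(x_1) = [D_1(x_1), E_1(x_1)] (a 1×2 row matrix), G_i(x_i) = [[E_i(x_i), 0], [D_i(x_i), E_i(x_i)]] (a 2×2 matrix) for 2 ≤ i ≤ d−1, and G_d(x_d) = [E_d(x_d); D_d(x_d)] (a 2×1 column matrix). Then for all (x_1,…,x_d), H(x_1,…,x_d) equals the unique entry of the product G_1(x_1)·G_2(x_2)⋯G_d(x_d). In particular H admits a TT representation with all ranks equal to 2. -/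
open scoped BigOperators

section Aux

variable {R : Type*} [CommRing R]

private lemma mul_tri (b a p q : R) :
    (!![b, a] : Matrix (Fin 1) (Fin 2) R) * !![p, 0; q, p] = !![b*p + a*q, a*p] := by
  ext i j
  fin_cases i <;> fin_cases j <;>
    simp [Matrix.mul_apply, Fin.sum_univ_two]

lemma part1_main (n : ℕ) (e dd : Fin (n+2) → R) :
    ∀ t (ht : t ≤ n),
    (!![dd 0, e 0] : Matrix (Fin 1) (Fin 2) R) *
      (List.ofFn (fun i : Fin t =>
        !![e ⟨i.1+1, by have := i.2; omega⟩, 0;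
           dd ⟨i.1+1, by have := i.2; omega⟩, e ⟨i.1+1, by have := i.2; omega⟩])).prod
    = !![∑ m ∈ Finset.univ.filter (fun m : Fin (n+2) => (m:ℕ) ≤ t),
          (∏ k ∈ Finset.univ.filter (fun k : Fin (n+2) => (k:ℕ) < (m:ℕ)), e k) * dd m *
          (∏ k ∈ Finset.univ.filter (fun k : Fin (n+2) => (m:ℕ) < (k:ℕ) ∧ (k:ℕ) ≤ t), e k),
        ∏ k ∈ Finset.univ.filter (fun k : Fin (n+2) => (k:ℕ) ≤ t), e k] := by
  intro t
  induction t with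
  | zero =>
    intro ht
    have h0 : Finset.univ.filter (fun k : Fin (n+2) => (k:ℕ) ≤ 0) = {0} := by
      ext k; simp only [Finset.mem_filter, Finset.mem_univ, true_and, Finset.mem_singleton, Fin.ext_iff, Fin.val_zero]; omega
    have h1 : Finset.univ.filter (fun k : Fin (n+2) => (k:ℕ) < ((0:Fin (n+2)):ℕ)) = ∅ := by
      ext k; simp
    have h2 : Finset.univ.filter
        (fun k : Fin (n+2) => ((0:Fin (n+2)):ℕ) < (k:ℕ) ∧ (k:ℕ) ≤ 0) = ∅ := by
      ext k; simp; omega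
    simp only [h0, Finset.sum_singleton, Finset.prod_singleton, h1, h2,
      Finset.prod_empty, one_mul, mul_one]
    simp
  | succ t ih =>
    intro ht
    have ih' := ih (by omega)
    have hj : t + 1 < n + 2 := by omega
    have hnm : (⟨t+1, hj⟩ : Fin (n+2)) ∉
        Finset.univ.filter (fun k : Fin (n+2) => (k:ℕ) ≤ t) := by simp
    have hins : Finset.univ.filter (fun k : Fin (n+2) => (k:ℕ) ≤ t+1) =
        insert ⟨t+1, hj⟩ (Finset.univ.filter (fun k : Fin (n+2) => (k:ℕ) ≤ t)) := by
      ext k; simp [Fin.ext_iff]; omega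
    have hA : (∏ k ∈ Finset.univ.filter (fun k : Fin (n+2) => (k:ℕ) ≤ t+1), e k)
        = (∏ k ∈ Finset.univ.filter (fun k : Fin (n+2) => (k:ℕ) ≤ t), e k) * e ⟨t+1, hj⟩ := by
      rw [hins, Finset.prod_insert hnm, mul_comm]
    have e1 : Finset.univ.filter
        (fun k : Fin (n+2) => (k:ℕ) < ((⟨t+1, hj⟩ : Fin (n+2)):ℕ)) =
        Finset.univ.filter (fun k : Fin (n+2) => (k:ℕ) ≤ t) := by
      ext k; simp
    have e2 : Finset.univ.filter (fun k : Fin (n+2) =>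
        ((⟨t+1, hj⟩ : Fin (n+2)):ℕ) < (k:ℕ) ∧ (k:ℕ) ≤ t+1) = ∅ := by
      ext k; simp; try omega
    have hstep : ∀ m ∈ Finset.univ.filter (fun m : Fin (n+2) => (m:ℕ) ≤ t),
        (∏ k ∈ Finset.univ.filter (fun k : Fin (n+2) => (k:ℕ) < (m:ℕ)), e k) * dd m *
          (∏ k ∈ Finset.univ.filter (fun k : Fin (n+2) => (m:ℕ) < (k:ℕ) ∧ (k:ℕ) ≤ t+1), e k)
        = (∏ k ∈ Finset.univ.filter (fun k : Fin (n+2) => (k:ℕ) < (m:ℕ)), e k) * dd m *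
          (∏ k ∈ Finset.univ.filter (fun k : Fin (n+2) => (m:ℕ) < (k:ℕ) ∧ (k:ℕ) ≤ t), e k)
            * e ⟨t+1, hj⟩ := by
      intro m hm
      have hm' : (m:ℕ) ≤ t := by simpa using hm
      have hsplit : Finset.univ.filter
          (fun k : Fin (n+2) => (m:ℕ) < (k:ℕ) ∧ (k:ℕ) ≤ t+1) =
          insert ⟨t+1, hj⟩ (Finset.univ.filter
            (fun k : Fin (n+2) => (m:ℕ) < (k:ℕ) ∧ (k:ℕ) ≤ t)) := by
        ext k; simp [Fin.ext_iff]; omega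
      have hnm2 : (⟨t+1, hj⟩ : Fin (n+2)) ∉ Finset.univ.filter
          (fun k : Fin (n+2) => (m:ℕ) < (k:ℕ) ∧ (k:ℕ) ≤ t) := by simp
      rw [hsplit, Finset.prod_insert hnm2]
      ring
    have hB : (∑ m ∈ Finset.univ.filter (fun m : Fin (n+2) => (m:ℕ) ≤ t+1),
          (∏ k ∈ Finset.univ.filter (fun k : Fin (n+2) => (k:ℕ) < (m:ℕ)), e k) * dd m *
          (∏ k ∈ Finset.univ.filter (fun k : Fin (n+2) => (m:ℕ) < (k:ℕ) ∧ (k:ℕ) ≤ t+1), e k))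
        = (∑ m ∈ Finset.univ.filter (fun m : Fin (n+2) => (m:ℕ) ≤ t),
          (∏ k ∈ Finset.univ.filter (fun k : Fin (n+2) => (k:ℕ) < (m:ℕ)), e k) * dd m *
          (∏ k ∈ Finset.univ.filter (fun k : Fin (n+2) => (m:ℕ) < (k:ℕ) ∧ (k:ℕ) ≤ t), e k))
            * e ⟨t+1, hj⟩
          + (∏ k ∈ Finset.univ.filter (fun k : Fin (n+2) => (k:ℕ) ≤ t), e k) * dd ⟨t+1, hj⟩ := by
      rw [hins, Finset.sum_insert hnm, e1, e2, Finset.prod_empty, mul_one,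
        Finset.sum_congr rfl hstep, ← Finset.sum_mul]
      ring
    rw [List.ofFn_succ', List.concat_eq_append, List.prod_append, List.prod_cons,
      List.prod_nil, mul_one, ← Matrix.mul_assoc]
    have hpre : (List.ofFn fun i : Fin t =>
        !![e ⟨(i.castSucc).1+1, by have := i.2; omega⟩, 0;
           dd ⟨(i.castSucc).1+1, by have := i.2; omega⟩,
           e ⟨(i.castSucc).1+1, by have := i.2; omega⟩]) =
        (List.ofFn fun i : Fin t =>
        !![e ⟨i.1+1, by have := i.2; omega⟩, 0;
           dd ⟨i.1+1, by have := i.2; omega⟩, e ⟨i.1+1, by have := i.2; omega⟩]) := by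
      rfl
    rw [hpre, ih', hB, hA, mul_tri]
    simp [Fin.val_last]

private lemma mul_col (b a p q : R) :
    ((!![b, a] : Matrix (Fin 1) (Fin 2) R) * !![p; q]) 0 0 = b*p + a*q := by
  simp [Matrix.mul_apply, Fin.sum_univ_two]

-- assembly (assuming part1_main proved)
lemma part1 (n : ℕ) (α : Fin (n + 2) → Type*)
    (E : ∀ k : Fin (n + 2), α k → R) (D : ∀ k : Fin (n + 2), α k → R)
    (x : ∀ i, α i)
    (main : (!![D 0 (x 0), E 0 (x 0)] : Matrix (Fin 1) (Fin 2) R) *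
      (List.ofFn (fun i : Fin n =>
        !![E ⟨i.1+1, by have := i.2; omega⟩ (x ⟨i.1+1, by have := i.2; omega⟩), 0;
           D ⟨i.1+1, by have := i.2; omega⟩ (x ⟨i.1+1, by have := i.2; omega⟩),
           E ⟨i.1+1, by have := i.2; omega⟩ (x ⟨i.1+1, by have := i.2; omega⟩)])).prod
    = !![∑ m ∈ Finset.univ.filter (fun m : Fin (n+2) => (m:ℕ) ≤ n),
          (∏ k ∈ Finset.univ.filter (fun k : Fin (n+2) => (k:ℕ) < (m:ℕ)), E k (x k)) * D m (x m) *
          (∏ k ∈ Finset.univ.filter (fun k : Fin (n+2) => (m:ℕ) < (k:ℕ) ∧ (k:ℕ) ≤ n), E k (x k)),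
        ∏ k ∈ Finset.univ.filter (fun k : Fin (n+2) => (k:ℕ) ≤ n), E k (x k)]) :
    (∑ m : Fin (n + 2),
        (∏ k ∈ Finset.univ.filter (fun k : Fin (n + 2) => (k : ℕ) < (m : ℕ)), E k (x k))
        * D m (x m)
        * ∏ k ∈ Finset.univ.filter (fun k : Fin (n + 2) => (m : ℕ) < (k : ℕ)), E k (x k))
    = (!![D 0 (x 0), E 0 (x 0)] *
             (List.ofFn (fun m : Fin n =>
               !![E m.succ.castSucc (x m.succ.castSucc), 0;
                  D m.succ.castSucc (x m.succ.castSucc),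
                  E m.succ.castSucc (x m.succ.castSucc)])).prod *
             !![E (Fin.last (n + 1)) (x (Fin.last (n + 1)));
                D (Fin.last (n + 1)) (x (Fin.last (n + 1)))]) 0 0 := by
  have hlist : (fun m : Fin n =>
      (!![E m.succ.castSucc (x m.succ.castSucc), 0;
          D m.succ.castSucc (x m.succ.castSucc),
          E m.succ.castSucc (x m.succ.castSucc)] : Matrix (Fin 2) (Fin 2) R)) =
      (fun i : Fin n =>
        !![E ⟨i.1+1, by have := i.2; omega⟩ (x ⟨i.1+1, by have := i.2; omega⟩), 0;
           D ⟨i.1+1, by have := i.2; omega⟩ (x ⟨i.1+1, by have := i.2; omega⟩),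
           E ⟨i.1+1, by have := i.2; omega⟩ (x ⟨i.1+1, by have := i.2; omega⟩)]) := by
    funext i; rfl
  rw [hlist, main, mul_col]
  rw [Fin.sum_univ_castSucc (f := fun m : Fin (n+2) =>
    (∏ k ∈ Finset.univ.filter (fun k : Fin (n + 2) => (k : ℕ) < (m : ℕ)), E k (x k))
        * D m (x m)
        * ∏ k ∈ Finset.univ.filter (fun k : Fin (n + 2) => (m : ℕ) < (k : ℕ)), E k (x k))]
  have eA : Finset.univ.filter
      (fun k : Fin (n+2) => (k:ℕ) < ((Fin.last (n+1) : Fin (n+2)):ℕ)) =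
      Finset.univ.filter (fun k : Fin (n+2) => (k:ℕ) ≤ n) := by
    ext k; simp [Fin.val_last]
  have eB : Finset.univ.filter
      (fun k : Fin (n+2) => ((Fin.last (n+1) : Fin (n+2)):ℕ) < (k:ℕ)) = ∅ := by
    ext k; simp [Fin.val_last]; omega
  have hstep : ∀ i : Fin (n+1),
      (∏ k ∈ Finset.univ.filter (fun k : Fin (n+2) => (k:ℕ) < ((i.castSucc : Fin (n+2)):ℕ)), E k (x k))
        * D i.castSucc (x i.castSucc) *
        (∏ k ∈ Finset.univ.filter (fun k : Fin (n+2) => ((i.castSucc : Fin (n+2)):ℕ) < (k:ℕ)), E k (x k))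
      = ((∏ k ∈ Finset.univ.filter (fun k : Fin (n+2) => (k:ℕ) < ((i.castSucc : Fin (n+2)):ℕ)), E k (x k))
          * D i.castSucc (x i.castSucc) *
        (∏ k ∈ Finset.univ.filter (fun k : Fin (n+2) => ((i.castSucc : Fin (n+2)):ℕ) < (k:ℕ) ∧ (k:ℕ) ≤ n), E k (x k)))
        * E (Fin.last (n+1)) (x (Fin.last (n+1))) := by
    intro i
    have hm' : ((i.castSucc : Fin (n+2)):ℕ) ≤ n := by
      have := i.2; simp [Fin.coe_castSucc]; omega
    have hsplit : Finset.univ.filter (fun k : Fin (n+2) => ((i.castSucc : Fin (n+2)):ℕ) < (k:ℕ)) =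
        insert (Fin.last (n+1)) (Finset.univ.filter
          (fun k : Fin (n+2) => ((i.castSucc : Fin (n+2)):ℕ) < (k:ℕ) ∧ (k:ℕ) ≤ n)) := by
      ext k
      simp only [Finset.mem_insert, Finset.mem_filter, Finset.mem_univ, true_and]
      constructor
      · intro h
        rcases Nat.lt_or_ge (k:ℕ) (n+1) with h2 | h2
        · right; omega
        · left; ext; simp [Fin.val_last]; omega
      · rintro (rfl | ⟨h1, h2⟩)
        · simp [Fin.val_last]; try omega
        · exact h1
    have hnm2 : (Fin.last (n+1) : Fin (n+2)) ∉ Finset.univ.filter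
        (fun k : Fin (n+2) => ((i.castSucc : Fin (n+2)):ℕ) < (k:ℕ) ∧ (k:ℕ) ≤ n) := by
      simp [Fin.val_last]
    rw [hsplit, Finset.prod_insert hnm2]
    ring
  have hsum : (∑ i : Fin (n+1),
      (∏ k ∈ Finset.univ.filter (fun k : Fin (n+2) => (k:ℕ) < ((i.castSucc : Fin (n+2)):ℕ)), E k (x k))
        * D i.castSucc (x i.castSucc) *
        (∏ k ∈ Finset.univ.filter (fun k : Fin (n+2) => ((i.castSucc : Fin (n+2)):ℕ) < (k:ℕ)), E k (x k)))
      = (∑ i : Fin (n+1),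
      (∏ k ∈ Finset.univ.filter (fun k : Fin (n+2) => (k:ℕ) < ((i.castSucc : Fin (n+2)):ℕ)), E k (x k))
        * D i.castSucc (x i.castSucc) *
        (∏ k ∈ Finset.univ.filter (fun k : Fin (n+2) => ((i.castSucc : Fin (n+2)):ℕ) < (k:ℕ) ∧ (k:ℕ) ≤ n), E k (x k)))
        * E (Fin.last (n+1)) (x (Fin.last (n+1))) := by
    rw [Finset.sum_mul]
    exact Finset.sum_congr rfl (fun i _ => hstep i)
  have himg : Finset.univ.filter (fun m : Fin (n+2) => (m:ℕ) ≤ n) =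
      Finset.image Fin.castSucc (Finset.univ : Finset (Fin (n+1))) := by
    ext k
    simp only [Finset.mem_filter, Finset.mem_univ, true_and, Finset.mem_image]
    constructor
    · intro h
      exact ⟨⟨(k:ℕ), by omega⟩, by ext; simp⟩
    · rintro ⟨a, rfl⟩
      have := a.2; simp [Fin.coe_castSucc]; omega
  have hBn : (∑ m ∈ Finset.univ.filter (fun m : Fin (n+2) => (m:ℕ) ≤ n),
      (∏ k ∈ Finset.univ.filter (fun k : Fin (n+2) => (k:ℕ) < (m:ℕ)), E k (x k)) * D m (x m) *
      (∏ k ∈ Finset.univ.filter (fun k : Fin (n+2) => (m:ℕ) < (k:ℕ) ∧ (k:ℕ) ≤ n), E k (x k)))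
      = ∑ i : Fin (n+1),
      (∏ k ∈ Finset.univ.filter (fun k : Fin (n+2) => (k:ℕ) < ((i.castSucc : Fin (n+2)):ℕ)), E k (x k))
        * D i.castSucc (x i.castSucc) *
        (∏ k ∈ Finset.univ.filter (fun k : Fin (n+2) => ((i.castSucc : Fin (n+2)):ℕ) < (k:ℕ) ∧ (k:ℕ) ≤ n), E k (x k)) := by
    rw [himg, Finset.sum_image (fun a _ b _ h => Fin.castSucc_injective _ h)]
  rw [hsum, eA, eB, Finset.prod_empty, mul_one, hBn]
  try ring

end Aux

section Aux2

def TTr (n : ℕ) (j : Fin (n+3)) : ℕ := if (j : ℕ) = 0 ∨ (j : ℕ) = n + 2 then 1 else 2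

lemma TTr_le (n : ℕ) (j : Fin (n+3)) : TTr n j ≤ 2 := by
  unfold TTr; split <;> omega

lemma TTr_pos (n : ℕ) (j : Fin (n+3)) : 0 < TTr n j := by
  unfold TTr; split <;> omega

lemma TTr_boundary (n : ℕ) (j : Fin (n+3)) (h : (j:ℕ) = 0 ∨ (j:ℕ) = n+2) : TTr n j = 1 := by
  unfold TTr; rw [if_pos h]

lemma TTr_interior (n : ℕ) (j : Fin (n+3)) (h1 : (j:ℕ) ≠ 0) (h2 : (j:ℕ) ≠ n+2) :
    TTr n j = 2 := by
  unfold TTr; rw [if_neg]; push_neg; exact ⟨h1, h2⟩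

def TTG {R : Type*} [CommRing R] (n : ℕ) (α : Fin (n+2) → Type*)
    (E : ∀ k : Fin (n+2), α k → R) (D : ∀ k : Fin (n+2), α k → R) :
    ∀ i : Fin (n+2), α i → Matrix (Fin (TTr n i.castSucc)) (Fin (TTr n i.succ)) R :=
  fun i xi => Matrix.of fun p q =>
    if (i:ℕ) = 0 then (if (q:ℕ) = 0 then D i xi else E i xi)
    else if (i:ℕ) = n+1 then (if (p:ℕ) = 0 then E i xi else D i xi)
    else if (p:ℕ) = (q:ℕ) then E i xi
    else if (p:ℕ) = 1 ∧ (q:ℕ) = 0 then D i xi else 0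

def TTβ (n : ℕ) (m : Fin (n+2)) : ∀ j : Fin (n+3), Fin (TTr n j) :=
  fun j =>
    if h : 0 < (j:ℕ) ∧ (j:ℕ) ≤ (m:ℕ) then
      ⟨1, by
        have hm := m.2
        have : TTr n j = 2 := TTr_interior n j (by omega) (by omega)
        omega⟩
    else ⟨0, TTr_pos n j⟩

lemma TTβ_val (n : ℕ) (m : Fin (n+2)) (j : Fin (n+3)) :
    ((TTβ n m j) : ℕ) = if 0 < (j:ℕ) ∧ (j:ℕ) ≤ (m:ℕ) then 1 else 0 := by
  unfold TTβ; split <;> rfl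

lemma TTG_factor {R : Type*} [CommRing R] (n : ℕ) (α : Fin (n+2) → Type*)
    (E D : ∀ k : Fin (n+2), α k → R) (x : ∀ i, α i) (m : Fin (n+2)) (i : Fin (n+2)) :
    TTG n α E D i (x i) (TTβ n m i.castSucc) (TTβ n m i.succ)
      = if i = m then D i (x i) else E i (x i) := by
  have hi := i.2
  have hm := m.2
  have hpc : ((i.castSucc : Fin (n+3)) : ℕ) = (i:ℕ) := rfl
  have hqc : ((i.succ : Fin (n+3)) : ℕ) = (i:ℕ) + 1 := rfl
  have heq : (i = m) ↔ ((i:ℕ) = (m:ℕ)) := Fin.ext_iff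
  simp only [TTG, Matrix.of_apply, TTβ_val, Fin.coe_castSucc, Fin.val_succ, heq]
  split_ifs <;> first | rfl | omega | (exfalso; tauto)

lemma TTβ_prod {R : Type*} [CommRing R] (n : ℕ) (α : Fin (n+2) → Type*)
    (E D : ∀ k : Fin (n+2), α k → R) (x : ∀ i, α i) (m : Fin (n+2)) :
    (∏ i : Fin (n+2), TTG n α E D i (x i) (TTβ n m i.castSucc) (TTβ n m i.succ))
      = (∏ k ∈ Finset.univ.filter (fun k : Fin (n + 2) => (k : ℕ) < (m : ℕ)), E k (x k))
        * D m (x m)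
        * ∏ k ∈ Finset.univ.filter (fun k : Fin (n + 2) => (m : ℕ) < (k : ℕ)), E k (x k) := by
  rw [Finset.prod_congr rfl (fun i _ => TTG_factor n α E D x m i)]
  rw [← Finset.mul_prod_erase Finset.univ _ (Finset.mem_univ m), if_pos rfl]
  have h1 : ∏ i ∈ Finset.univ.erase m, (if i = m then D i (x i) else E i (x i))
      = ∏ i ∈ Finset.univ.erase m, E i (x i) :=
    Finset.prod_congr rfl (fun i hi => if_neg (Finset.ne_of_mem_erase hi))
  rw [h1]
  have h2 : (Finset.univ.erase m) =
      (Finset.univ.filter (fun k : Fin (n + 2) => (k : ℕ) < (m : ℕ))) ∪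
      (Finset.univ.filter (fun k : Fin (n + 2) => (m : ℕ) < (k : ℕ))) := by
    ext k
    have hkm : (k = m) ↔ ((k:ℕ) = (m:ℕ)) := Fin.ext_iff
    simp only [Finset.mem_erase, Finset.mem_union, Finset.mem_filter, Finset.mem_univ,
      true_and, and_true, ne_eq, hkm]
    omega
  have h3 : Disjoint
      (Finset.univ.filter (fun k : Fin (n + 2) => (k : ℕ) < (m : ℕ)))
      (Finset.univ.filter (fun k : Fin (n + 2) => (m : ℕ) < (k : ℕ))) := by
    rw [Finset.disjoint_left]
    intro k hk1 hk2
    simp only [Finset.mem_filter] at hk1 hk2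
    omega
  rw [h2, Finset.prod_union h3]
  ring

lemma TTβ_inj (n : ℕ) : ∀ m1 m2 : Fin (n+2), TTβ n m1 = TTβ n m2 → m1 = m2 := by
  have key : ∀ m1 m2 : Fin (n+2), (m1:ℕ) < (m2:ℕ) → TTβ n m1 ≠ TTβ n m2 := by
    intro m1 m2 hlt heq
    have hm2 := m2.2
    open Fin.NatCast in have hj : ((m2:ℕ) : Fin (n+3)).val = (m2:ℕ) := by rw [Fin.val_cast_of_lt (by omega)]
    set j : Fin (n+3) := ⟨(m2:ℕ), by omega⟩ with hjdef
    have h1 := congrArg (fun β => ((β j : Fin (TTr n j)) : ℕ)) heq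
    simp only [TTβ_val] at h1
    rw [if_neg (by simp [hjdef]; omega), if_pos (by simp only [hjdef, Fin.val_mk]; omega)] at h1
    exact absurd h1 (by omega)
  intro m1 m2 h
  rcases Nat.lt_trichotomy (m1:ℕ) (m2:ℕ) with hc | hc | hc
  · exact absurd h (key m1 m2 hc)
  · exact Fin.ext hc
  · exact absurd h.symm (key m2 m1 hc)

lemma TT_zero {R : Type*} [CommRing R] (n : ℕ) (α : Fin (n+2) → Type*)
    (E D : ∀ k : Fin (n+2), α k → R) (x : ∀ i, α i)
    (β : ∀ j : Fin (n+3), Fin (TTr n j))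
    (hnot : β ∉ Finset.image (TTβ n) Finset.univ) :
    (∏ i : Fin (n+2), TTG n α E D i (x i) (β i.castSucc) (β i.succ)) = 0 := by
  classical
  have hbound : ∀ j : Fin (n+3), ((j:ℕ) = 0 ∨ (j:ℕ) = n+2) → ((β j):ℕ) = 0 := by
    intro j hj
    have h2 := (β j).2
    have h3 := TTr_boundary n j hj
    omega
  have hle : ∀ j : Fin (n+3), ((β j):ℕ) ≤ 1 := by
    intro j
    have h2 := (β j).2
    have := TTr_le n j
    omega
  by_cases hex : ∃ jj jj' : Fin (n+3), (jj':ℕ) = (jj:ℕ)+1 ∧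
      1 ≤ (jj:ℕ) ∧ (jj:ℕ) ≤ n ∧ ((β jj):ℕ) = 0 ∧ ((β jj'):ℕ) = 1
  · obtain ⟨jj, jj', h0, h1, h2, h3, h4⟩ := hex
    have hjj2 := jj.2
    set i : Fin (n+2) := ⟨(jj:ℕ), by omega⟩ with hidef
    apply Finset.prod_eq_zero (Finset.mem_univ i)
    have hip : i.castSucc = jj := by ext; simp [hidef]
    have hp : ((β i.castSucc):ℕ) = 0 := by rw [hip]; exact h3
    have hq : ((β i.succ):ℕ) = 1 := by
      have his : i.succ = jj' := by ext; simp [hidef]; omega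
      rw [his]; exact h4
    have hiv : (i:ℕ) = (jj:ℕ) := rfl
    simp only [TTG, Matrix.of_apply]
    rw [if_neg (by omega), if_neg (by omega), if_neg (by omega),
      if_neg (by rw [not_and_or]; left; omega)]
  · push_neg at hex
    exfalso
    apply hnot
    rw [Finset.mem_image]
    have hstep : ∀ a : ℕ, (h1 : 1 ≤ a) → (h2 : a ≤ n) →
        ((β ⟨a+1, by omega⟩):ℕ) = 1 → ((β ⟨a, by omega⟩):ℕ) = 1 := by
      intro a ha1 ha2 hsucc
      have hne := hex ⟨a, by omega⟩ ⟨a+1, by omega⟩ rfl (by simpa using ha1)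
        (by simpa using ha2)
      have hub := hle ⟨a, by omega⟩
      by_contra hzero
      have hz : ((β ⟨a, by omega⟩):ℕ) = 0 := by omega
      exact (hne hz) hsucc
    have hdown : ∀ (k a : ℕ) (ha : 1 ≤ a) (hak : a + k ≤ n+1),
        ((β ⟨a+k, by omega⟩):ℕ) = 1 → ((β ⟨a, by omega⟩):ℕ) = 1 := by
      intro k
      induction k with
      | zero => intro a h1 h2 h3; exact h3
      | succ k ih =>
        intro a h1 h2 h3
        exact ih a h1 (by omega) (hstep (a+k) (by omega) (by omega) h3)
    by_cases hS : (Finset.univ.filter (fun j : Fin (n+3) => ((β j):ℕ) = 1)).Nonempty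
    · have hm'mem : ((β ((Finset.univ.filter
          (fun j : Fin (n+3) => ((β j):ℕ) = 1)).max' hS)):ℕ) = 1 := by
        have := Finset.max'_mem _ hS
        exact (Finset.mem_filter.1 this).2
      set m' := (Finset.univ.filter (fun j : Fin (n+3) => ((β j):ℕ) = 1)).max' hS
        with hm'def
      have hm'1 : 1 ≤ (m':ℕ) := by
        by_contra hcon
        have := hbound m' (Or.inl (by omega))
        omega
      have hm'n : (m':ℕ) ≤ n+1 := by
        have := m'.2
        by_contra hcon
        have := hbound m' (Or.inr (by omega))
        omega
      refine ⟨⟨(m':ℕ), by omega⟩, Finset.mem_univ _, ?_⟩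
      funext j
      apply Fin.ext
      rw [TTβ_val]
      have hjlt := j.2
      by_cases hc : 0 < (j:ℕ) ∧ (j:ℕ) ≤ (m':ℕ)
      · rw [if_pos (by simpa using hc)]
        have hjm : (⟨(j:ℕ) + ((m':ℕ) - (j:ℕ)), by omega⟩ : Fin (n+3)) = m' := by
          ext; simp; omega
        have hval := hdown ((m':ℕ) - (j:ℕ)) (j:ℕ) (by omega) (by omega)
          (by rw [hjm]; exact hm'mem)
        have hj' : (⟨(j:ℕ), by omega⟩ : Fin (n+3)) = j := by ext; simp
        rw [hj'] at hval
        omega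
      · rw [if_neg (by simpa using hc)]
        by_cases hb : (j:ℕ) = 0 ∨ (j:ℕ) = n+2
        · exact (hbound j hb).symm
        · have hballs := hle j
          by_contra hcon
          have hj1 : ((β j):ℕ) = 1 := by omega
          have hjS : j ∈ Finset.univ.filter (fun j : Fin (n+3) => ((β j):ℕ) = 1) := by
            rw [Finset.mem_filter]
            exact ⟨Finset.mem_univ _, hj1⟩
          have := Finset.le_max' _ j hjS
          rw [← hm'def, Fin.le_def] at this
          omega
    · refine ⟨0, Finset.mem_univ _, ?_⟩
      funext j
      apply Fin.ext
      rw [TTβ_val]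
      have hnotS : ((β j):ℕ) ≠ 1 := by
        intro hj1
        exact hS ⟨j, by rw [Finset.mem_filter]; exact ⟨Finset.mem_univ _, hj1⟩⟩
      have := hle j
      rw [if_neg (by simp; omega)]
      omega

lemma TTsum {R : Type*} [CommRing R] (n : ℕ) (α : Fin (n+2) → Type*)
    (E D : ∀ k : Fin (n+2), α k → R) (x : ∀ i, α i) :
    (∑ β : ∀ j : Fin (n+3), Fin (TTr n j),
        ∏ i : Fin (n+2), TTG n α E D i (x i) (β i.castSucc) (β i.succ))
    = ∑ m : Fin (n + 2),
        (∏ k ∈ Finset.univ.filter (fun k : Fin (n + 2) => (k : ℕ) < (m : ℕ)), E k (x k))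
        * D m (x m)
        * ∏ k ∈ Finset.univ.filter (fun k : Fin (n + 2) => (m : ℕ) < (k : ℕ)), E k (x k) := by
  classical
  rw [← Finset.sum_subset (Finset.subset_univ (Finset.image (TTβ n) Finset.univ))
    (fun β _ hβ => TT_zero n α E D x β hβ)]
  rw [Finset.sum_image (fun m1 _ m2 _ h => TTβ_inj n m1 m2 h)]
  exact Finset.sum_congr rfl (fun m _ => TTβ_prod n α E D x m)

end Aux2

/-- `f` admits a tensor-train (TT) representation with ranks `r 0, …, r d`
(with `r 0 = r d = 1`): there are cores `G i` such that `f x` equals the `(0,0)`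
entry of the matrix product `G 0 (x 0) * ⋯ * G (d-1) (x (d-1))`, written here as
the sum over all index paths (the boundary indices range over `Fin 1`). -/
def IsTTRep {R : Type*} [CommRing R] {d : ℕ} {α : Fin d → Type*}
    (f : (∀ i, α i) → R) (r : Fin (d + 1) → ℕ) : Prop :=
  r 0 = 1 ∧ r (Fin.last d) = 1 ∧
    ∃ G : ∀ i : Fin d, α i → Matrix (Fin (r i.castSucc)) (Fin (r i.succ)) R,
      ∀ x : ∀ i, α i,
        f x = ∑ β : ∀ j : Fin (d + 1), Fin (r j),
                ∏ i : Fin d, G i (x i) (β i.castSucc) (β i.succ)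


/-- **Rank-2 TT decomposition of the Laplace-like sum**
`H = Σ_m E ⊗ ⋯ ⊗ E ⊗ D_m ⊗ E ⊗ ⋯ ⊗ E` (cf. Section 4.2 of the paper).
The dimension is `d = n + 2 ≥ 2`, positions are 0-based. `H` equals the unique
entry of the product of the explicit rank-2 cores, and in particular admits a
TT representation with all (interior) ranks equal to 2. -/
theorem laplace_like_sum_rank_two {R : Type*} [CommRing R] (n : ℕ)
    (α : Fin (n + 2) → Type*)
    (E : ∀ k : Fin (n + 2), α k → R) (D : ∀ k : Fin (n + 2), α k → R)
    (H : (∀ i, α i) → R)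
    (hH : ∀ x : ∀ i, α i,
      H x = ∑ m : Fin (n + 2),
        (∏ k ∈ Finset.univ.filter (fun k : Fin (n + 2) => (k : ℕ) < (m : ℕ)), E k (x k))
        * D m (x m)
        * ∏ k ∈ Finset.univ.filter (fun k : Fin (n + 2) => (m : ℕ) < (k : ℕ)), E k (x k)) :
    (∀ x : ∀ i, α i,
      H x = (!![D 0 (x 0), E 0 (x 0)] *
             (List.ofFn (fun m : Fin n =>
               !![E m.succ.castSucc (x m.succ.castSucc), 0;
                  D m.succ.castSucc (x m.succ.castSucc),
                  E m.succ.castSucc (x m.succ.castSucc)])).prod *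
             !![E (Fin.last (n + 1)) (x (Fin.last (n + 1)));
                D (Fin.last (n + 1)) (x (Fin.last (n + 1)))]) 0 0)
    ∧ IsTTRep H (fun j : Fin (n + 3) => if (j : ℕ) = 0 ∨ (j : ℕ) = n + 2 then 1 else 2) := by
  constructor
  · intro x
    rw [hH x]
    exact part1 n α E D x
      (part1_main n (fun k => E k (x k)) (fun k => D k (x k)) n le_rfl)
  · refine ⟨by simp, by simp [Fin.val_last], TTG n α E D, fun x => ?_⟩
    rw [hH x]
    exact (TTsum n α E D x).symm
end

section
/- Let L ≥ 2 and κ, φ ∈ ℝ. The function f : (Fin 2)^L → ℝ defined by f(x_1,…,x_L) = sin(κ · Σ_{l=1}^L (x_l : ℝ)·2^{l-1} + φ) admits a TT representation with all ranks at most 2. (This is the rank-2 QTT representation of a sampled sine function.) -/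
open scoped BigOperators

noncomputable def Vv (φ : ℝ) : Fin 2 → ℝ := ![Real.sin φ, Real.cos φ]
noncomputable def Ww (θ : ℝ) : Fin 2 → ℝ := ![Real.cos θ, Real.sin θ]
noncomputable def Rot (θ : ℝ) : Matrix (Fin 2) (Fin 2) ℝ :=
  !![Real.cos θ, -Real.sin θ; Real.sin θ, Real.cos θ]

lemma vrot (φ θ : ℝ) (c : Fin 2) :
    ∑ b : Fin 2, Vv φ b * Rot θ b c = Vv (φ + θ) c := by
  fin_cases c <;>
    simp [Vv, Rot, Fin.sum_univ_two, Real.sin_add, Real.cos_add] <;> ring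

lemma gen2 (d : ℕ) (θ : Fin (d + 1) → ℝ) (φ : ℝ) :
    ∑ β : Fin (d + 1) → Fin 2,
      Vv φ (β 0) * (∏ i : Fin d, Rot (θ i.castSucc) (β i.castSucc) (β i.succ))
        * Ww (θ (Fin.last d)) (β (Fin.last d))
    = Real.sin (φ + ∑ i, θ i) := by
  induction d generalizing φ with
  | zero =>
      rw [← Equiv.sum_comp (Equiv.funUnique (Fin 1) (Fin 2)).symm]
      simp [Vv, Ww, Fin.sum_univ_two, Real.sin_add, Equiv.funUnique]
  | succ d ih =>
      rw [← Equiv.sum_comp (Fin.consEquiv (fun _ : Fin (d + 2) => Fin 2))]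
      rw [Fintype.sum_prod_type]
      simp only [Fin.consEquiv, Equiv.coe_fn_mk]
      rw [Finset.sum_comm]
      have key : ∀ (γ : ∀ i : Fin (d+1), Fin 2),
          ∑ b : Fin 2,
            Vv φ ((Fin.cons b γ : ∀ _ : Fin (d+2), Fin 2) 0) *
              (∏ i : Fin (d+1), Rot (θ i.castSucc) ((Fin.cons b γ : ∀ _ : Fin (d+2), Fin 2) i.castSucc)
                ((Fin.cons b γ : ∀ _ : Fin (d+2), Fin 2) i.succ)) *
              Ww (θ (Fin.last (d+1))) ((Fin.cons b γ : ∀ _ : Fin (d+2), Fin 2) (Fin.last (d+1)))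
          = Vv (φ + θ 0) (γ 0) *
              (∏ i : Fin d, Rot ((θ ∘ Fin.succ) i.castSucc) (γ i.castSucc) (γ i.succ)) *
              Ww ((θ ∘ Fin.succ) (Fin.last d)) (γ (Fin.last d)) := by
        intro γ
        have e1 : (Fin.last (d+1) : Fin (d+2)) = (Fin.last d).succ := rfl
        simp only [Fin.prod_univ_succ, Fin.castSucc_zero, Fin.cons_zero, e1, ← Fin.succ_castSucc,
          Fin.cons_succ, Function.comp_apply]
        rw [← vrot φ (θ 0) (γ 0), Finset.sum_mul, Finset.sum_mul]
        exact Finset.sum_congr rfl fun b _ => by ring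
      rw [Finset.sum_congr rfl (fun γ _ => key γ), ih]
      congr 1
      rw [Fin.sum_univ_succ θ]
      simp only [Function.comp_apply]
      ring

def qr (n : ℕ) : Fin (n + 3) → ℕ := fun j => if 0 < j.val ∧ j.val < n + 2 then 2 else 1

lemma qr_le (n : ℕ) (j : Fin (n + 3)) : qr n j ≤ 2 := by
  unfold qr; split_ifs <;> omega

def qto (n : ℕ) (γ : Fin (n + 1) → Fin 2) (j : Fin (n + 3)) : Fin (qr n j) :=
  ⟨if h : 0 < j.val ∧ j.val < n + 2 then (γ ⟨j.val - 1, by omega⟩).val else 0, by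
    unfold qr; split_ifs with h
    · exact (γ _).isLt
    · omega⟩

def qinv (n : ℕ) (β : ∀ j : Fin (n + 3), Fin (qr n j)) (i : Fin (n + 1)) : Fin 2 :=
  ⟨(β ⟨i.val + 1, by omega⟩).val, lt_of_lt_of_le (Fin.is_lt _) (qr_le n _)⟩

def qEquiv (n : ℕ) : (Fin (n + 1) → Fin 2) ≃ (∀ j : Fin (n + 3), Fin (qr n j)) where
  toFun := qto n
  invFun := qinv n
  left_inv γ := by
    funext i
    apply Fin.ext
    show (qto n γ ⟨i.val + 1, _⟩).val = _
    have hc : 0 < ((⟨i.val + 1, by omega⟩ : Fin (n + 3))).val ∧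
        ((⟨i.val + 1, by omega⟩ : Fin (n + 3))).val < n + 2 := by
      simp only [Fin.val_mk]
      omega
    simp only [qto, hc.1, hc.2, Fin.val_mk, and_true, true_and, dite_true]
    rfl
  right_inv β := by
    funext j
    apply Fin.ext
    show (if h : 0 < j.val ∧ j.val < n + 2 then (qinv n β ⟨j.val - 1, _⟩).val else 0) = _
    split_ifs with h
    · show (β ⟨j.val - 1 + 1, _⟩).val = _
      have e : (⟨j.val - 1 + 1, by omega⟩ : Fin (n + 3)) = j := by
        apply Fin.ext
        simp only [Fin.val_mk]
        omega
      rw [e]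
    · have h2 : (β j).val < qr n j := (β j).isLt
      have e : qr n j = 1 := by unfold qr; rw [if_neg h]
      omega

lemma qto_mid (n : ℕ) (γ : Fin (n + 1) → Fin 2) (j : Fin (n + 3))
    (h : 0 < j.val ∧ j.val < n + 2) :
    Fin.castLE (qr_le n j) (qto n γ j) = γ ⟨j.val - 1, by omega⟩ := by
  apply Fin.ext
  show (if h : 0 < j.val ∧ j.val < n + 2 then (γ ⟨j.val - 1, by omega⟩).val else 0) = _
  rw [dif_pos h]

lemma qto_end (n : ℕ) (γ : Fin (n + 1) → Fin 2) (j : Fin (n + 3))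
    (h : ¬(0 < j.val ∧ j.val < n + 2)) :
    Fin.castLE (qr_le n j) (qto n γ j) = 0 := by
  apply Fin.ext
  show (if h : 0 < j.val ∧ j.val < n + 2 then (γ ⟨j.val - 1, by omega⟩).val else 0) = _
  rw [dif_neg h]
  rfl

lemma row0 (a b : ℝ) (c : Fin 2) : !![a, b; (0:ℝ), 0] 0 c = ![a, b] c := by
  fin_cases c <;> simp

lemma col0 (a b : ℝ) (c : Fin 2) : !![a, (0:ℝ); b, 0] c 0 = ![a, b] c := by
  fin_cases c <;> simp

noncomputable def Mcore (n : ℕ) (κ φ : ℝ) (i : Fin (n + 2)) (x : Fin 2) :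
    Matrix (Fin 2) (Fin 2) ℝ :=
  if i.val = 0 then
    !![Real.sin (κ * ((x : ℕ) : ℝ) + φ), Real.cos (κ * ((x : ℕ) : ℝ) + φ); 0, 0]
  else if i.val = n + 1 then
    !![Real.cos (κ * 2 ^ (n + 1) * ((x : ℕ) : ℝ)), 0;
       Real.sin (κ * 2 ^ (n + 1) * ((x : ℕ) : ℝ)), 0]
  else Rot (κ * 2 ^ (i : ℕ) * ((x : ℕ) : ℝ))


/-- **Rank-2 QTT representation of a sampled sine**: the function
`x ↦ sin(κ x + φ)` sampled at `x = Σ_l x_l 2^(l-1)`, `x_l ∈ {0,1}`,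
`L = n + 2 ≥ 2` binary digits, admits a TT representation with all ranks
at most 2. -/
theorem qtt_sin_rank_le_two (n : ℕ) (κ φ : ℝ) :
    ∃ r : Fin (n + 3) → ℕ, (∀ j, r j ≤ 2) ∧
      IsTTRep (fun x : Fin (n + 2) → Fin 2 =>
        Real.sin (κ * (∑ l : Fin (n + 2), ((x l : ℕ) : ℝ) * 2 ^ (l : ℕ)) + φ)) r := by
  refine ⟨qr n, qr_le n, ?_, ?_, ?_⟩
  · simp [qr]
  · simp [qr, Fin.last]
  refine ⟨fun i xv => Matrix.of fun a b =>
      Mcore n κ φ i xv (Fin.castLE (qr_le n _) a) (Fin.castLE (qr_le n _) b),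
    fun x => ?_⟩
  rw [← Equiv.sum_comp (qEquiv n)]
  symm
  have key : ∀ γ : Fin (n + 1) → Fin 2,
      (∏ i : Fin (n + 2),
        Mcore n κ φ i (x i) (Fin.castLE (qr_le n i.castSucc) (qto n γ i.castSucc))
          (Fin.castLE (qr_le n i.succ) (qto n γ i.succ)))
      = Vv (κ * ((x 0 : ℕ) : ℝ) + φ) (γ 0) *
          (∏ k : Fin n,
            Rot ((fun m : Fin (n+1) => κ * 2 ^ ((m : ℕ) + 1) * ((x m.succ : ℕ) : ℝ)) k.castSucc)
              (γ k.castSucc) (γ k.succ)) *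
        Ww ((fun m : Fin (n+1) => κ * 2 ^ ((m : ℕ) + 1) * ((x m.succ : ℕ) : ℝ)) (Fin.last n))
          (γ (Fin.last n)) := by
    intro γ
    rw [Fin.prod_univ_succ, Fin.prod_univ_castSucc]
    have h0 : Mcore n κ φ 0 (x 0)
        (Fin.castLE (qr_le n _) (qto n γ (0 : Fin (n+2)).castSucc))
        (Fin.castLE (qr_le n _) (qto n γ (0 : Fin (n+2)).succ))
        = Vv (κ * ((x 0 : ℕ) : ℝ) + φ) (γ 0) := by
      rw [qto_end n γ ((0 : Fin (n+2)).castSucc) (by simp only [Fin.coe_castSucc, Fin.val_succ, Fin.val_zero, Fin.val_last]; omega),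
        qto_mid n γ ((0 : Fin (n+2)).succ) (by simp only [Fin.coe_castSucc, Fin.val_succ, Fin.val_zero, Fin.val_last]; omega)]
      have e : (⟨(((0 : Fin (n+2)).succ : Fin (n+3))).val - 1, by simp only [Fin.coe_castSucc, Fin.val_succ, Fin.val_zero, Fin.val_last]; omega⟩ : Fin (n+1)) = 0 := by
        apply Fin.ext; simp
      rw [e]
      unfold Mcore
      rw [if_pos (by simp)]
      rw [row0]
      rfl
    have hmid : ∀ k : Fin n,
        Mcore n κ φ (k.castSucc.succ) (x k.castSucc.succ)
          (Fin.castLE (qr_le n _) (qto n γ (k.castSucc.succ : Fin (n+2)).castSucc))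
          (Fin.castLE (qr_le n _) (qto n γ (k.castSucc.succ : Fin (n+2)).succ))
        = Rot ((fun m : Fin (n+1) => κ * 2 ^ ((m : ℕ) + 1) * ((x m.succ : ℕ) : ℝ)) k.castSucc)
            (γ k.castSucc) (γ k.succ) := by
      intro k
      have hk := k.isLt
      rw [qto_mid n γ ((k.castSucc.succ : Fin (n+2)).castSucc) (by simp only [Fin.coe_castSucc, Fin.val_succ, Fin.val_zero, Fin.val_last]; omega),
        qto_mid n γ ((k.castSucc.succ : Fin (n+2)).succ) (by simp only [Fin.coe_castSucc, Fin.val_succ, Fin.val_zero, Fin.val_last]; omega)]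
      have e1 : (⟨((k.castSucc.succ : Fin (n+2)).castSucc : Fin (n+3)).val - 1, by simp only [Fin.coe_castSucc, Fin.val_succ, Fin.val_zero, Fin.val_last]; omega⟩
          : Fin (n+1)) = k.castSucc := by
        apply Fin.ext; simp
      have e2 : (⟨((k.castSucc.succ : Fin (n+2)).succ : Fin (n+3)).val - 1, by simp only [Fin.coe_castSucc, Fin.val_succ, Fin.val_zero, Fin.val_last]; omega⟩
          : Fin (n+1)) = k.succ := by
        apply Fin.ext; simp
      rw [e1, e2]
      unfold Mcore
      rw [if_neg (by simp), if_neg (by simp; omega)]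
      rfl
    have hlast : Mcore n κ φ ((Fin.last n).succ) (x ((Fin.last n).succ))
          (Fin.castLE (qr_le n _) (qto n γ ((Fin.last n).succ : Fin (n+2)).castSucc))
          (Fin.castLE (qr_le n _) (qto n γ ((Fin.last n).succ : Fin (n+2)).succ))
        = Ww ((fun m : Fin (n+1) => κ * 2 ^ ((m : ℕ) + 1) * ((x m.succ : ℕ) : ℝ)) (Fin.last n))
            (γ (Fin.last n)) := by
      rw [qto_mid n γ (((Fin.last n).succ : Fin (n+2)).castSucc) (by simp only [Fin.coe_castSucc, Fin.val_succ, Fin.val_zero, Fin.val_last]; omega),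
        qto_end n γ (((Fin.last n).succ : Fin (n+2)).succ) (by simp only [Fin.coe_castSucc, Fin.val_succ, Fin.val_zero, Fin.val_last]; omega)]
      have e : (⟨(((Fin.last n).succ : Fin (n+2)).castSucc : Fin (n+3)).val - 1, by simp only [Fin.coe_castSucc, Fin.val_succ, Fin.val_zero, Fin.val_last]; omega⟩
          : Fin (n+1)) = Fin.last n := by
        apply Fin.ext; simp
      rw [e]
      unfold Mcore
      rw [if_neg (by simp), if_pos (by simp)]
      rw [col0]
      rfl
    rw [h0, hlast, Finset.prod_congr rfl fun k _ => hmid k]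
    ring
  refine Eq.trans (Finset.sum_congr rfl fun γ _ => key γ) ?_
  rw [gen2 n (fun m : Fin (n+1) => κ * 2 ^ ((m : ℕ) + 1) * ((x m.succ : ℕ) : ℝ))
    (κ * ((x 0 : ℕ) : ℝ) + φ)]
  congr 1
  have hs : (∑ m : Fin (n+1), κ * 2 ^ ((m : ℕ) + 1) * ((x m.succ : ℕ) : ℝ))
      = ∑ m : Fin (n+1), κ * (((x m.succ : ℕ) : ℝ) * 2 ^ ((m.succ : Fin (n+2)) : ℕ)) := by
    refine Finset.sum_congr rfl fun m _ => ?_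
    rw [Fin.val_succ]
    ring
  rw [hs, Finset.mul_sum,
    Fin.sum_univ_succ (f := fun l : Fin (n+2) => κ * (((x l : ℕ) : ℝ) * 2 ^ (l : ℕ)))]
  simp only [Fin.val_zero, pow_zero, mul_one]
  ring
end

section
/- Let R be a commutative ring, L ≥ 2, and p ∈ ℕ. The function f : (Fin 2)^L → R defined by f(x_1,…,x_L) = (Σ_{l=1}^L (x_l : R)·2^{l-1})^p admits a TT representation with all ranks at most p + 1. (This is the rank-(p+1) QTT representation of a sampled monomial x^p.) -/
open scoped BigOperators

section
variable {R : Type*} [CommRing R]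

def qttContract (R : Type*) [CommRing R] (N : ℕ) :
    (m : ℕ) → (Fin N → R) → (Fin m → Fin N → Fin N → R) → (Fin N → R) → R
  | 0, v, _, c => ∑ a, v a * c a
  | m + 1, v, B, c => qttContract R N m (fun b => ∑ a, v a * B 0 a b) (fun i => B i.succ) c

lemma qtt_chain (N : ℕ) (m : ℕ) (v : Fin N → R) (B : Fin m → Fin N → Fin N → R)
    (c : Fin N → R) :
    ∑ γ : Fin (m + 1) → Fin N,
        v (γ 0) * ((∏ i : Fin m, B i (γ i.castSucc) (γ i.succ)) * c (γ (Fin.last m)))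
      = qttContract R N m v B c := by
  induction m generalizing v with
  | zero =>
      rw [← (Equiv.funUnique (Fin 1) (Fin N)).symm.sum_comp]
      simp [qttContract]
  | succ m ih =>
      rw [← (Fin.consEquiv (fun _ : Fin (m + 2) => Fin N)).sum_comp, Fintype.sum_prod_type]
      rw [qttContract, ← ih]
      rw [Finset.sum_comm]
      refine Finset.sum_congr rfl fun γ _ => ?_
      rw [Finset.sum_mul]
      refine Finset.sum_congr rfl fun a _ => ?_
      simp only [Fin.consEquiv_apply, Fin.cons_zero, Fin.prod_univ_succ, Fin.castSucc_zero,
        ← Fin.succ_castSucc, Fin.cons_succ, ← Fin.succ_last, Fin.cons_succ]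
      ring

lemma qtt_binom_sum (p q : ℕ) (hq : q ≤ p) (t w : R) :
    ∑ a : Fin (p + 1), t ^ (a : ℕ) * ((Nat.choose q a : R) * w ^ (q - (a : ℕ)))
      = (t + w) ^ q := by
  rw [Fin.sum_univ_eq_sum_range (fun a => t ^ a * ((Nat.choose q a : R) * w ^ (q - a)))]
  rw [add_pow]
  rw [← Finset.sum_subset (Finset.range_subset_range.2 (Nat.succ_le_succ hq))
    (fun a _ ha => by
      have : q < a := by simpa using ha
      simp [Nat.choose_eq_zero_of_lt this])]
  exact Finset.sum_congr rfl fun a _ => by ring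

lemma qtt_contract_binom (p : ℕ) : ∀ (m : ℕ) (t : R) (w : Fin m → R) (u : R),
    qttContract R (p + 1) m (fun a => t ^ (a : ℕ))
      (fun i a b => (Nat.choose (b : ℕ) (a : ℕ) : R) * (w i) ^ ((b : ℕ) - (a : ℕ)))
      (fun a => (Nat.choose p (a : ℕ) : R) * u ^ (p - (a : ℕ)))
    = (t + (∑ i, w i) + u) ^ p := by
  intro m
  induction m with
  | zero =>
      intro t w u
      rw [qttContract]
      simp [qtt_binom_sum p p le_rfl t u]
  | succ m ih =>
      intro t w u
      rw [qttContract]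
      have h1 : (fun b : Fin (p+1) => ∑ a : Fin (p+1),
          t ^ (a : ℕ) * ((Nat.choose (b : ℕ) (a : ℕ) : R) * (w 0) ^ ((b:ℕ) - (a : ℕ))))
          = fun b : Fin (p+1) => (t + w 0) ^ (b : ℕ) := by
        funext b
        exact qtt_binom_sum p (b : ℕ) (Fin.is_le b) t (w 0)
      rw [h1, ih (t + w 0) (fun i => w i.succ) u]
      rw [Fin.sum_univ_succ]
      ring

end

/-- **Rank-(p+1) QTT representation of a sampled monomial**: the function
`x ↦ x^p` sampled at `x = Σ_l x_l 2^(l-1)`, `x_l ∈ {0,1}`, `L = n + 2 ≥ 2`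
binary digits, admits a TT representation with all ranks at most `p + 1`. -/
theorem qtt_monomial_rank_le (R : Type*) [CommRing R] (n p : ℕ) :
    ∃ r : Fin (n + 3) → ℕ, (∀ j, r j ≤ p + 1) ∧
      IsTTRep (fun x : Fin (n + 2) → Fin 2 =>
        (∑ l : Fin (n + 2), ((x l : ℕ) : R) * 2 ^ (l : ℕ)) ^ p) r := by
  classical
  set r : Fin (n + 3) → ℕ := Fin.cons 1 (Fin.snoc (fun _ : Fin (n + 1) => p + 1) 1) with hr
  have h0 : r 0 = 1 := by simp [hr]
  have hlast : r ((Fin.last (n + 1)).succ) = 1 := by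
    rw [hr, Fin.cons_succ]; simp
  have hmid : ∀ j : Fin (n + 1), r j.castSucc.succ = p + 1 := by
    intro j; rw [hr, Fin.cons_succ, Fin.snoc_castSucc]
  refine ⟨r, ?_, h0, by rw [← Fin.succ_last]; exact hlast, ?_⟩
  · intro j
    refine Fin.cases ?_ (fun j => ?_) j
    · simp [hr]
    · refine Fin.lastCases ?_ (fun j => ?_) j
      · rw [hlast]; omega
      · rw [hmid]
  · refine ⟨fun i xi a b =>
      (Nat.choose (if (i : ℕ) = n + 1 then p else (b : ℕ)) (a : ℕ) : R) *
        (((xi : ℕ) : R) * 2 ^ (i : ℕ)) ^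
          ((if (i : ℕ) = n + 1 then p else (b : ℕ)) - (a : ℕ)), ?_⟩
    intro x
    let E : (Fin 1 × Fin 1 × (Fin (n + 1) → Fin (p + 1))) ≃ (∀ j : Fin (n + 3), Fin (r j)) :=
      (Equiv.prodCongr (finCongr h0.symm)
        ((Equiv.prodCongr (finCongr hlast.symm)
          (Equiv.piCongrRight fun j => finCongr (hmid j).symm)).trans
          (Fin.snocEquiv fun j : Fin (n + 2) => Fin (r j.succ)))).trans
        (Fin.consEquiv fun j : Fin (n + 3) => Fin (r j))
    rw [← Equiv.sum_comp E]
    rw [Fintype.sum_prod_type]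
    simp only [Fin.sum_univ_one]
    rw [Fintype.sum_prod_type]
    simp only [Fin.sum_univ_one]
    have hE : ∀ (a : Fin 1) (b : Fin 1) (γ : Fin (n+1) → Fin (p+1)),
        E (a, b, γ) = Fin.cons (finCongr h0.symm a)
          (Fin.snoc (fun j => finCongr (hmid j).symm (γ j)) (finCongr hlast.symm b)) := by
      intro a b γ
      rfl
    symm
    simp only [hE]
    have key : ∀ γ : Fin (n+1) → Fin (p+1), ∀ β : ∀ j : Fin (n+3), Fin (r j),
        β = Fin.cons (finCongr h0.symm 0)
            (Fin.snoc (fun j => finCongr (hmid j).symm (γ j)) (finCongr hlast.symm 0)) →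
        (∏ i : Fin (n+2),
          (Nat.choose (if (i : ℕ) = n + 1 then p else ((β i.succ : Fin (r i.succ)) : ℕ))
              ((β i.castSucc : Fin (r i.castSucc)) : ℕ) : R) *
            (((x i : ℕ) : R) * 2 ^ (i : ℕ)) ^
              ((if (i : ℕ) = n + 1 then p else ((β i.succ : Fin (r i.succ)) : ℕ)) -
                ((β i.castSucc : Fin (r i.castSucc)) : ℕ)))
        = (((x 0 : ℕ) : R) * 2 ^ ((0 : Fin (n+2)) : ℕ)) ^ ((γ 0 : ℕ)) *
            ((∏ i : Fin n,
              (Nat.choose ((γ i.succ : ℕ)) ((γ i.castSucc : ℕ)) : R) *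
                (((x (i.castSucc.succ) : ℕ) : R) * 2 ^ ((i.castSucc.succ : Fin (n+2)) : ℕ)) ^
                  ((γ i.succ : ℕ) - (γ i.castSucc : ℕ))) *
              ((Nat.choose p ((γ (Fin.last n) : ℕ)) : R) *
                (((x ((Fin.last n).succ) : ℕ) : R) * 2 ^ (((Fin.last n).succ : Fin (n+2)) : ℕ)) ^
                  (p - (γ (Fin.last n) : ℕ)))) := by
      intro γ β hβ
      subst hβ
      rw [Fin.prod_univ_succ, Fin.prod_univ_castSucc]
      have hs0 : ((Fin.snoc (fun j => finCongr (hmid j).symm (γ j)) (finCongr hlast.symm 0) :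
          ∀ j : Fin (n+2), Fin (r j.succ)) 0 : ℕ) = (γ 0 : ℕ) := by
        rw [show (0 : Fin (n+2)) = Fin.castSucc 0 from (Fin.castSucc_zero).symm,
          Fin.snoc_castSucc]
        simp
        rfl
      simp only [finCongr_apply] at hs0
      have hne : ∀ i : Fin n, ¬ (((i : ℕ) + 1) = n + 1) := fun i => by omega
      have hne0 : ¬ ((0 : ℕ) = n + 1) := by omega
      simp only [Fin.castSucc_zero, ← Fin.succ_castSucc, Fin.cons_succ, Fin.cons_zero]
      simp only [Fin.succ_castSucc, Fin.succ_last, Fin.snoc_castSucc, Fin.snoc_last, hs0]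
      simp only [finCongr_apply, Fin.coe_cast, Fin.val_zero, Fin.val_succ, Fin.coe_castSucc,
        Fin.val_last, hne, hne0, if_false, if_true, eq_self_iff_true, Nat.choose_zero_right,
        Nat.cast_one, one_mul, Nat.sub_zero]
      rw [hs0]
    refine ((Finset.sum_congr rfl fun γ _ => key γ _ rfl).trans ?_)
    refine (qtt_chain (p+1) n
      (fun a : Fin (p+1) => (((x 0 : ℕ) : R) * 2 ^ ((0 : Fin (n+2)) : ℕ)) ^ (a : ℕ))
      (fun i a b => (Nat.choose (b : ℕ) (a : ℕ) : R) *
        (((x (i.castSucc.succ) : ℕ) : R) * 2 ^ ((i.castSucc.succ : Fin (n+2)) : ℕ)) ^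
          ((b : ℕ) - (a : ℕ)))
      (fun a => (Nat.choose p (a : ℕ) : R) *
        (((x ((Fin.last n).succ) : ℕ) : R) * 2 ^ (((Fin.last n).succ : Fin (n+2)) : ℕ)) ^
          (p - (a : ℕ)))).trans ?_
    refine (qtt_contract_binom p n
      (((x 0 : ℕ) : R) * 2 ^ ((0 : Fin (n+2)) : ℕ))
      (fun i => ((x (i.castSucc.succ) : ℕ) : R) * 2 ^ ((i.castSucc.succ : Fin (n+2)) : ℕ))
      (((x ((Fin.last n).succ) : ℕ) : R) * 2 ^ (((Fin.last n).succ : Fin (n+2)) : ℕ))).trans ?_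
    congr 1
    rw [Fin.sum_univ_succ, Fin.sum_univ_castSucc]
    ring
end

section
/- Let R be a commutative ring and L ≥ 2. Define the shift matrix function s : (Fin 2 × Fin 2)^L → R on grouped binary indices by s((x_1,x'_1),…,(x_L,x'_L)) = 1 if Σ_{l=1}^L x'_l·2^{l-1} = Σ_{l=1}^L x_l·2^{l-1} + 1 (as natural numbers), and 0 otherwise. Then s admits a TT representation with all ranks at most 2. (This is the rank-2 QTT representation of the shift-by-one matrix of size 2^L.) -/
open scoped BigOperators

/-- local transfer matrix entry -/
def qttM (R : Type*) [CommRing R] (p : Fin 2 × Fin 2) (c c' : Fin 2) : R :=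
  if (p.2 : ℕ) + 2 * (c' : ℕ) = (p.1 : ℕ) + (c : ℕ) then 1 else 0

def qttr (n : ℕ) : Fin (n + 3) → ℕ :=
  fun j => if j = 0 ∨ j = Fin.last (n + 2) then 1 else 2

def qttw (n : ℕ) : ∀ j : Fin (n + 3), Fin (qttr n j) → Fin 2 :=
  fun j β =>
    if j = 0 then 1 else if j = Fin.last (n + 2) then 0
    else ⟨β.val % 2, Nat.mod_lt _ (by norm_num)⟩

def qttG (R : Type*) [CommRing R] (n : ℕ) (i : Fin (n + 2)) (p : Fin 2 × Fin 2) :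
    Matrix (Fin (qttr n i.castSucc)) (Fin (qttr n i.succ)) R :=
  fun β β' => qttM R p (qttw n i.castSucc β) (qttw n i.succ β')

lemma step_scalar (R : Type*) [CommRing R] (p : Fin 2 × Fin 2) (a c' : Fin 2)
    (S1 S2 K : ℕ) :
    (∑ c : Fin 2, qttM R p a c *
        (if S2 + K * (c' : ℕ) = S1 + (c : ℕ) then (1 : R) else 0))
      = if (p.2 : ℕ) + 2 * S2 + 2 * K * (c' : ℕ)
          = (p.1 : ℕ) + 2 * S1 + (a : ℕ) then 1 else 0 := by
  have h1 := p.1.isLt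
  have h2 := p.2.isLt
  have ha := a.isLt
  rw [Fin.sum_univ_two]
  unfold qttM
  fin_cases c' <;> simp only [Fin.val_zero, Fin.val_one, mul_zero, mul_one, add_zero] <;>
    split_ifs <;> first | (exfalso; omega) | ring

lemma lemF {R : Type*} [CommRing R] (L : ℕ) (x : Fin L → Fin 2 × Fin 2)
    (v u : Fin 2 → R) :
    (∑ b : Fin (L + 1) → Fin 2,
        v (b 0) * (∏ i : Fin L, qttM R (x i) (b i.castSucc) (b i.succ)) *
          u (b (Fin.last L)))
      = ∑ c : Fin 2, ∑ c' : Fin 2, v c *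
          (if (∑ l : Fin L, ((x l).2 : ℕ) * 2 ^ (l : ℕ)) + 2 ^ L * (c' : ℕ)
              = (∑ l : Fin L, ((x l).1 : ℕ) * 2 ^ (l : ℕ)) + (c : ℕ)
            then (1 : R) else 0) * u c' := by
  induction L generalizing v with
  | zero =>
      rw [← Equiv.sum_comp (Equiv.funUnique (Fin 1) (Fin 2)).symm]
      simp [Fin.sum_univ_two]
  | succ L ih =>
      have hsplit : ∀ g : Fin 2 × Fin 2 → ℕ,
          (∑ l : Fin (L + 1), g (x l) * 2 ^ (l : ℕ))
            = g (x 0) + 2 * ∑ l : Fin L, g (x l.succ) * 2 ^ (l : ℕ) := by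
        intro g
        rw [Fin.sum_univ_succ, Finset.mul_sum]
        simp only [Fin.val_zero, pow_zero, mul_one, Fin.val_succ, pow_succ]
        congr 1
        refine Finset.sum_congr rfl fun l _ => by ring
      rw [← Equiv.sum_comp (Fin.consEquiv (fun _ : Fin (L + 2) => Fin 2))]
      simp only [Fin.consEquiv_apply]
      rw [Fintype.sum_prod_type]
      have hterm : ∀ (a : Fin 2) (b' : Fin (L + 1) → Fin 2),
          v (Fin.cons (α := fun _ => Fin 2) a b' 0) *
              (∏ i : Fin (L + 1),
                qttM R (x i) (Fin.cons (α := fun _ => Fin 2) a b' i.castSucc)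
                  (Fin.cons (α := fun _ => Fin 2) a b' i.succ)) *
            u (Fin.cons (α := fun _ => Fin 2) a b' (Fin.last (L + 1)))
          = v a * (qttM R (x 0) a (b' 0) *
              ∏ i : Fin L, qttM R (x i.succ) (b' i.castSucc) (b' i.succ)) *
            u (b' (Fin.last L)) := by
        intro a b'
        have hlast : Fin.cons (α := fun _ => Fin 2) a b' (Fin.last (L + 1)) = b' (Fin.last L) := by
          rw [show (Fin.last (L + 1)) = (Fin.last L).succ from rfl, Fin.cons_succ]
        have h1 : ∀ i : Fin L, Fin.cons (α := fun _ => Fin 2) a b' i.succ.castSucc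
            = b' i.castSucc := fun i => by
          rw [show (i.succ.castSucc) = (i.castSucc).succ from rfl, Fin.cons_succ]
        rw [Fin.prod_univ_succ, hlast]
        simp only [Fin.castSucc_zero, Fin.cons_zero, Fin.cons_succ, h1]
      simp only [hterm]
      rw [Finset.sum_comm]
      have hmid : ∀ b' : Fin (L + 1) → Fin 2,
          (∑ a : Fin 2, v a * (qttM R (x 0) a (b' 0) *
              ∏ i : Fin L, qttM R (x i.succ) (b' i.castSucc) (b' i.succ)) *
            u (b' (Fin.last L)))
          = (fun c => ∑ a : Fin 2, v a * qttM R (x 0) a c) (b' 0) *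
              (∏ i : Fin L, qttM R (x i.succ) (b' i.castSucc) (b' i.succ)) *
            u (b' (Fin.last L)) := by
        intro b'
        simp only
        rw [Finset.sum_mul, Finset.sum_mul]
        refine Finset.sum_congr rfl fun a _ => by ring
      simp only [hmid]
      rw [ih (fun i => x i.succ) (fun c => ∑ a : Fin 2, v a * qttM R (x 0) a c)]
      conv_lhs => rw [Finset.sum_comm]
      conv_rhs => rw [Finset.sum_comm]
      refine Finset.sum_congr rfl fun c' _ => ?_
      have hstep := step_scalar R (x 0)
      calc (∑ c : Fin 2, (∑ a : Fin 2, v a * qttM R (x 0) a c) *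
              (if (∑ l : Fin L, ((x l.succ).2 : ℕ) * 2 ^ (l : ℕ)) + 2 ^ L * (c' : ℕ)
                  = (∑ l : Fin L, ((x l.succ).1 : ℕ) * 2 ^ (l : ℕ)) + (c : ℕ)
                then (1 : R) else 0) * u c')
          = ∑ a : Fin 2, (∑ c : Fin 2, qttM R (x 0) a c *
              (if (∑ l : Fin L, ((x l.succ).2 : ℕ) * 2 ^ (l : ℕ)) + 2 ^ L * (c' : ℕ)
                  = (∑ l : Fin L, ((x l.succ).1 : ℕ) * 2 ^ (l : ℕ)) + (c : ℕ)
                then (1 : R) else 0)) * (v a * u c') := by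
            simp only [Finset.sum_mul, Finset.mul_sum]
            rw [Finset.sum_comm]
            exact Finset.sum_congr rfl fun a _ => Finset.sum_congr rfl fun c _ => by ring
        _ = ∑ a : Fin 2, v a *
              (if (∑ l : Fin (L + 1), ((x l).2 : ℕ) * 2 ^ (l : ℕ))
                    + 2 ^ (L + 1) * (c' : ℕ)
                  = (∑ l : Fin (L + 1), ((x l).1 : ℕ) * 2 ^ (l : ℕ)) + (a : ℕ)
                then (1 : R) else 0) * u c' := by
            refine Finset.sum_congr rfl fun a _ => ?_
            rw [step_scalar R (x 0) a c']
            have hcond : ((x 0).2 : ℕ) + 2 * (∑ l : Fin L, ((x l.succ).2 : ℕ) * 2 ^ (l : ℕ))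
                  + 2 * 2 ^ L * (c' : ℕ)
                  = ((x 0).1 : ℕ) + 2 * (∑ l : Fin L, ((x l.succ).1 : ℕ) * 2 ^ (l : ℕ)) + (a : ℕ)
                ↔ (∑ l : Fin (L + 1), ((x l).2 : ℕ) * 2 ^ (l : ℕ)) + 2 ^ (L + 1) * (c' : ℕ)
                  = (∑ l : Fin (L + 1), ((x l).1 : ℕ) * 2 ^ (l : ℕ)) + (a : ℕ) := by
              rw [hsplit (fun p => (p.2 : ℕ)), hsplit (fun p => (p.1 : ℕ)), pow_succ]
              constructor <;> intro h <;> linarith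
            rw [if_congr hcond rfl rfl]
            ring

lemma qtt_bridge (n : ℕ) {R : Type*} [CommRing R] (F : (Fin (n + 3) → Fin 2) → R) :
    (∑ β : (∀ j : Fin (n + 3), Fin (qttr n j)), F (fun j => qttw n j (β j)))
      = ∑ b : Fin (n + 3) → Fin 2,
          if b 0 = 1 ∧ b (Fin.last (n + 2)) = 0 then F b else 0 := by
  have h0last : (0 : Fin (n + 3)) ≠ Fin.last (n + 2) := by
    simp [Fin.ext_iff]
  classical
  rw [Finset.sum_ite, Finset.sum_const_zero, add_zero]
  refine Finset.sum_bij' (fun β _ => fun j => qttw n j (β j))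
    (fun b _ => fun j => (⟨if j = 0 ∨ j = Fin.last (n + 2) then 0 else (b j).val, by
      have := (b j).isLt
      unfold qttr
      split_ifs <;> omega⟩ : Fin (qttr n j))) ?_ ?_ ?_ ?_ ?_
  · intro β _
    simp only [Finset.mem_filter, Finset.mem_univ, true_and]
    constructor
    · simp [qttw]
    · simp [qttw, h0last.symm]
  · intro b _
    exact Finset.mem_univ _
  · intro β _
    funext j
    apply Fin.ext
    simp only
    split_ifs with h
    · have hlt := (β j).isLt
      have hr : qttr n j = 1 := by simp [qttr, h]
      omega
    · push_neg at h
      have hlt := (β j).isLt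
      have hr : qttr n j = 2 := by simp [qttr, h.1, h.2]
      simp only [qttw, if_neg h.1, if_neg h.2]
      omega
  · intro b hb
    simp only [Finset.mem_filter, Finset.mem_univ, true_and] at hb
    funext j
    by_cases h0 : j = 0
    · subst h0
      simp [qttw, hb.1]
    · by_cases hl : j = Fin.last (n + 2)
      · subst hl
        simp [qttw, h0last.symm, hb.2]
      · apply Fin.ext
        simp only [qttw, if_neg h0, if_neg hl]
        have := (b j).isLt
        simp only [if_neg (not_or.mpr ⟨h0, hl⟩)]
        omega
  · intro β _
    rfl

/-- **Rank-2 QTT representation of the shift-by-one matrix** of size `2^L`,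
`L = n + 2 ≥ 2`: the matrix `s(x, x') = [x' = x + 1]`, written entrywise on the
grouped binary digits `(x_l, x'_l) ∈ Fin 2 × Fin 2`, admits a TT representation
with all ranks at most 2. -/
theorem qtt_shift_rank_le_two (R : Type*) [CommRing R] (n : ℕ) :
    ∃ r : Fin (n + 3) → ℕ, (∀ j, r j ≤ 2) ∧
      IsTTRep (fun x : Fin (n + 2) → Fin 2 × Fin 2 =>
        if (∑ l : Fin (n + 2), ((x l).2 : ℕ) * 2 ^ (l : ℕ))
            = (∑ l : Fin (n + 2), ((x l).1 : ℕ) * 2 ^ (l : ℕ)) + 1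
        then (1 : R) else 0) r := by
  refine ⟨qttr n, ?_, ?_, ?_, qttG R n, ?_⟩
  · intro j
    unfold qttr
    split_ifs <;> omega
  · simp [qttr]
  · simp [qttr]
  · intro x
    have hb := qtt_bridge n (R := R)
      (fun b => ∏ i : Fin (n + 2), qttM R (x i) (b i.castSucc) (b i.succ))
    have key := lemF (R := R) (n + 2) x
      (fun c => if c = 1 then (1 : R) else 0) (fun c => if c = 0 then (1 : R) else 0)
    have hmatch : (∑ β : (∀ j : Fin (n + 3), Fin (qttr n j)),
        ∏ i : Fin (n + 2), qttG R n i (x i) (β i.castSucc) (β i.succ))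
        = ∑ β : (∀ j : Fin (n + 3), Fin (qttr n j)),
            (fun b : Fin (n + 3) → Fin 2 =>
              ∏ i : Fin (n + 2), qttM R (x i) (b i.castSucc) (b i.succ))
            (fun j => qttw n j (β j)) := rfl
    rw [hmatch, hb]
    have hw : ∀ b : Fin (n + 3) → Fin 2,
        (if b 0 = 1 ∧ b (Fin.last (n + 2)) = 0 then
            (∏ i : Fin (n + 2), qttM R (x i) (b i.castSucc) (b i.succ)) else 0)
          = (fun c => if c = 1 then (1 : R) else 0) (b 0) *
              (∏ i : Fin (n + 2), qttM R (x i) (b i.castSucc) (b i.succ)) *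
            (fun c => if c = 0 then (1 : R) else 0) (b (Fin.last (n + 2))) := by
      intro b
      by_cases h1 : b 0 = 1 <;> by_cases h2 : b (Fin.last (n + 2)) = 0 <;>
        simp [h1, h2]
    simp only [hw]
    rw [key]
    simp [Fin.sum_univ_two]
end
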